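/- Let p ≤ k be positive integers. Let X be a multiset of k vectors from {−1,1}^p with S = Σ_{v∈X} v vᵀ invertible, and suppose that for every u ∈ X and every w ∈ {−1,1}^p one has det(S − uuᵀ + wwᵀ) ≤ (π/2)·det(S). Then det(S) ≥ k^p · ((k−p+1)/k · p/(p + k(π/2 − 1)))^p. -/

import Mathlib

open Matrix BigOperators

section AuxHelpers
variable {n : Type*} [Fintype n] [DecidableEq n]

lemma aux_dotsymm (M : Matrix n n ℝ) (hM : Mᵀ = M) (u w : n → ℝ) :
    u ⬝ᵥ M *ᵥ w = w ⬝ᵥ M *ᵥ u := by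
  rw [dotProduct_mulVec, ← mulVec_transpose, hM, dotProduct_comm]

lemma aux_trace_mul_vecMulVec (M : Matrix n n ℝ) (a b : n → ℝ) :
    trace (M * vecMulVec a b) = b ⬝ᵥ M *ᵥ a := by
  simp only [trace, diag, mul_apply, vecMulVec_apply, dotProduct, mulVec, Finset.sum_mul,
    Finset.mul_sum]
  apply Finset.sum_congr rfl; intro i _; apply Finset.sum_congr rfl; intro j _; ring

lemma aux_trace_vecMulVec (a b : n → ℝ) :
    trace (vecMulVec a b) = b ⬝ᵥ a := by
  simp only [trace, diag, vecMulVec_apply, dotProduct]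
  apply Finset.sum_congr rfl; intro i _; ring

lemma aux_dot_vecMulVec (a b x : n → ℝ) :
    x ⬝ᵥ (vecMulVec a b) *ᵥ x = (x ⬝ᵥ a) * (b ⬝ᵥ x) := by
  simp only [dotProduct, vecMulVec_apply, mulVec, Finset.mul_sum, Finset.sum_mul]
  rw [Finset.sum_comm]
  apply Finset.sum_congr rfl; intro i _; apply Finset.sum_congr rfl; intro j _; ring

lemma aux_det_rank_two (S : Matrix n n ℝ) (hdet : IsUnit S.det) (hsym : Sᵀ = S) (u w : n → ℝ) :
    (S - vecMulVec u u + vecMulVec w w).det =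
      S.det * ((1 - u ⬝ᵥ S⁻¹ *ᵥ u) * (1 + w ⬝ᵥ S⁻¹ *ᵥ w) + (u ⬝ᵥ S⁻¹ *ᵥ w) ^ 2) := by
  classical
  set A : Matrix n (Fin 2) ℝ := Matrix.of (fun i j => if j = 0 then w i else u i) with hA
  set B : Matrix (Fin 2) n ℝ := Matrix.of (fun j i => if j = 0 then w i else -(u i)) with hB
  have hAB : A * B = vecMulVec w w - vecMulVec u u := by
    ext i i'
    simp [hA, hB, mul_apply, Fin.sum_univ_two, vecMulVec_apply]
    ring
  have hrepr : S - vecMulVec u u + vecMulVec w w = S * (1 + S⁻¹ * A * B) := by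
    rw [mul_add, mul_one, Matrix.mul_assoc S⁻¹ A B, ← mul_assoc,
      mul_nonsing_inv _ hdet, one_mul, hAB]
    abel
  have hsyminv : (S⁻¹)ᵀ = S⁻¹ := by rw [transpose_nonsing_inv, hsym]
  have hcross : w ⬝ᵥ S⁻¹ *ᵥ u = u ⬝ᵥ S⁻¹ *ᵥ w := aux_dotsymm _ hsyminv _ _
  have h00 : (B * (S⁻¹ * A)) 0 0 = w ⬝ᵥ S⁻¹ *ᵥ w := by
    simp [hA, hB, mul_apply, mulVec, dotProduct, Finset.mul_sum]
  have h01 : (B * (S⁻¹ * A)) 0 1 = w ⬝ᵥ S⁻¹ *ᵥ u := by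
    simp [hA, hB, mul_apply, mulVec, dotProduct, Finset.mul_sum]
  have h10 : (B * (S⁻¹ * A)) 1 0 = -(u ⬝ᵥ S⁻¹ *ᵥ w) := by
    simp [hA, hB, mul_apply, mulVec, dotProduct, Finset.mul_sum, Finset.sum_neg_distrib]
  have h11 : (B * (S⁻¹ * A)) 1 1 = -(u ⬝ᵥ S⁻¹ *ᵥ u) := by
    simp [hA, hB, mul_apply, mulVec, dotProduct, Finset.mul_sum, Finset.sum_neg_distrib]
  have this2 : (1 + S⁻¹ * A * B).det = (1 + B * (S⁻¹ * A)).det := by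
    rw [det_one_add_mul_comm (S⁻¹ * A) B]
  have e00 : ((1 + B * (S⁻¹ * A)) : Matrix (Fin 2) (Fin 2) ℝ) 0 0 = 1 + w ⬝ᵥ S⁻¹ *ᵥ w := by
    simp [Matrix.add_apply, Matrix.one_apply, h00]
  have e01 : ((1 + B * (S⁻¹ * A)) : Matrix (Fin 2) (Fin 2) ℝ) 0 1 = w ⬝ᵥ S⁻¹ *ᵥ u := by
    simp [Matrix.add_apply, Matrix.one_apply, h01]
  have e10 : ((1 + B * (S⁻¹ * A)) : Matrix (Fin 2) (Fin 2) ℝ) 1 0 = -(u ⬝ᵥ S⁻¹ *ᵥ w) := by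
    simp [Matrix.add_apply, Matrix.one_apply, h10]
  have e11 : ((1 + B * (S⁻¹ * A)) : Matrix (Fin 2) (Fin 2) ℝ) 1 1 = 1 - u ⬝ᵥ S⁻¹ *ᵥ u := by
    simp [Matrix.add_apply, Matrix.one_apply, h11]
    ring
  rw [hrepr, det_mul, this2, det_fin_two, e00, e01, e10, e11, hcross]
  ring
end AuxHelpers

noncomputable def sgn (b : Bool) : ℝ := if b then 1 else -1

lemma sgn_not (b : Bool) : sgn (!b) = - sgn b := by cases b <;> simp [sgn]

lemma sgn_sq (b : Bool) : sgn b * sgn b = 1 := by cases b <;> norm_num [sgn]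

lemma sgn_pm (b : Bool) : sgn b = -1 ∨ sgn b = 1 := by cases b <;> simp [sgn]

section SignSums
variable {n : Type*} [Fintype n] [DecidableEq n]

lemma sum_sgn_orth {i j : n} (hij : i ≠ j) :
    ∑ w : n → Bool, sgn (w i) * sgn (w j) = 0 := by
  have hinv : Function.Involutive (fun w : n → Bool => Function.update w i (!(w i))) := by
    intro w
    ext t
    by_cases ht : t = i
    · subst ht; simp
    · simp [Function.update_of_ne ht]
  set e : Equiv.Perm (n → Bool) := hinv.toPerm with he
  have := Equiv.sum_comp e (fun w : n → Bool => sgn (w i) * sgn (w j))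
  have hneg : ∀ w : n → Bool,
      sgn ((e w) i) * sgn ((e w) j) = -(sgn (w i) * sgn (w j)) := by
    intro w
    simp only [he, Function.Involutive.coe_toPerm, Function.update_self,
      Function.update_of_ne (Ne.symm hij), sgn_not]
    ring
  rw [Finset.sum_congr rfl (fun w _ => hneg w)] at this
  rw [Finset.sum_neg_distrib] at this
  linarith

lemma sum_sgn_quad (M : Matrix n n ℝ) :
    ∑ w : n → Bool, (fun i => sgn (w i)) ⬝ᵥ M *ᵥ (fun i => sgn (w i))
      = 2 ^ (Fintype.card n) * trace M := by
  have step1 : ∀ w : n → Bool, (fun i => sgn (w i)) ⬝ᵥ M *ᵥ (fun i => sgn (w i))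
      = ∑ i, ∑ j, M i j * (sgn (w i) * sgn (w j)) := by
    intro w
    simp only [dotProduct, mulVec, Finset.mul_sum]
    apply Finset.sum_congr rfl; intro i _; apply Finset.sum_congr rfl; intro j _; ring
  rw [Finset.sum_congr rfl (fun w _ => step1 w), Finset.sum_comm]
  have step2 : ∀ i : n, ∑ w : n → Bool, ∑ j, M i j * (sgn (w i) * sgn (w j))
      = 2 ^ (Fintype.card n) * M i i := by
    intro i
    rw [Finset.sum_comm]
    rw [Finset.sum_eq_single i]
    · rw [← Finset.mul_sum]
      have : ∑ w : n → Bool, sgn (w i) * sgn (w i) = 2 ^ (Fintype.card n) := by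
        simp only [sgn_sq]
        simp [Finset.card_univ]
      rw [this]; ring
    · intro j _ hji
      rw [← Finset.mul_sum, sum_sgn_orth (Ne.symm hji), mul_zero]
    · intro h; exact absurd (Finset.mem_univ i) h
  rw [Finset.sum_congr rfl (fun i _ => step2 i), ← Finset.mul_sum]
  rfl
end SignSums

lemma trace_eq_sum_eig {n : Type*} [Fintype n] [DecidableEq n] (A : Matrix n n ℝ)
    (hA : A.IsHermitian) : trace A = ∑ i, hA.eigenvalues i := by
  simpa using hA.trace_eq_sum_eigenvalues

lemma det_le_trace_pow {p : ℕ} (hp : 0 < p) (A : Matrix (Fin p) (Fin p) ℝ)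
    (hA : A.PosDef) : A.det ≤ (trace A / p) ^ p := by
  have hH := hA.1
  have hdet : A.det = ∏ i, hH.eigenvalues i := by
    have := hH.det_eq_prod_eigenvalues
    simpa using this
  have htr : trace A = ∑ i, hH.eigenvalues i := trace_eq_sum_eig A hH
  have hpos : ∀ i, 0 < hH.eigenvalues i := hA.eigenvalues_pos
  have hgm := Real.geom_mean_le_arith_mean_weighted Finset.univ
      (fun _ => 1 / (p : ℝ)) hH.eigenvalues
      (fun i _ => by positivity)
      (by simp [Finset.card_univ]; field_simp)
      (fun i _ => (hpos i).le)
  have hsum : ∑ i, (1 / (p : ℝ)) * hH.eigenvalues i = trace A / p := by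
    rw [htr, ← Finset.mul_sum]; ring
  rw [hsum] at hgm
  have hprod : ∏ i, hH.eigenvalues i = (∏ i, hH.eigenvalues i ^ (1 / (p : ℝ))) ^ p := by
    rw [← Finset.prod_pow]
    apply Finset.prod_congr rfl
    intro i _
    rw [← Real.rpow_natCast (hH.eigenvalues i ^ (1 / (p : ℝ))) p, ← Real.rpow_mul (hpos i).le]
    rw [one_div, inv_mul_cancel₀ (by exact_mod_cast hp.ne' : (p : ℝ) ≠ 0), Real.rpow_one]
  rw [hdet, hprod]
  apply pow_le_pow_left₀ _ hgm
  exact Finset.prod_nonneg fun i _ => Real.rpow_nonneg (hpos i).le _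

lemma aux_vv_herm {n : Type*} [Fintype n] (u : n → ℝ) : (vecMulVec u u).IsHermitian := by
  rw [Matrix.IsHermitian, conjTranspose_eq_transpose_of_trivial]
  ext i j
  simp [vecMulVec_apply, transpose_apply, mul_comm]

lemma aux_vv_psd {n : Type*} [Fintype n] [DecidableEq n] (u : n → ℝ) : (vecMulVec u u).PosSemidef := by
  simpa using posSemidef_vecMulVec_self_star u

lemma aux_msum_psd {n : Type*} [Fintype n] [DecidableEq n] (X : Multiset (n → ℝ)) :
    ((X.map fun u => vecMulVec u u).sum).PosSemidef := by
  induction X using Multiset.induction_on with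
  | empty => simpa using Matrix.PosSemidef.zero
  | cons a s ih =>
      rw [Multiset.map_cons, Multiset.sum_cons]
      exact (aux_vv_psd a).add ih

lemma aux_psd_pd {n : Type*} [Fintype n] [DecidableEq n] {M : Matrix n n ℝ}
    (hM : M.PosSemidef) (hdet : IsUnit M.det) : M.PosDef := by
  exact hM.posDef_iff_isUnit.mpr ((isUnit_iff_isUnit_det M).mpr hdet)

lemma aux_msum_le {α : Type*} (s : Multiset α) (f g : α → ℝ) (h : ∀ x ∈ s, f x ≤ g x) :
    (s.map f).sum ≤ (s.map g).sum := by
  induction s using Multiset.induction_on with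
  | empty => simp
  | cons a s ih =>
      simp only [Multiset.map_cons, Multiset.sum_cons]
      exact add_le_add (h a (Multiset.mem_cons_self a s))
        (ih fun x hx => h x (Multiset.mem_cons_of_mem hx))

/-- A (π/2)-approximate local optimum over the hypercube {−1,1}^p has determinant
at least k^p · ((k−p+1)/k · p/(p + k(π/2−1)))^p. -/
theorem hypercube_local_opt_guarantee
    (p k : ℕ) (hp : 0 < p) (hpk : p ≤ k)
    (X : Multiset (Fin p → ℝ)) (hcard : Multiset.card X = k)
    (hX : ∀ u ∈ X, ∀ i, u i = -1 ∨ u i = 1)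
    (S : Matrix (Fin p) (Fin p) ℝ)
    (hS : S = (X.map fun u => vecMulVec u u).sum)
    (hSinv : IsUnit S.det)
    (hlocal : ∀ u ∈ X, ∀ w : Fin p → ℝ, (∀ i, w i = -1 ∨ w i = 1) →
      (S - vecMulVec u u + vecMulVec w w).det ≤ (Real.pi / 2) * S.det) :
    S.det ≥ (k : ℝ) ^ p *
      (((k : ℝ) - p + 1) / k * (p / (p + k * (Real.pi / 2 - 1)))) ^ p := by
  classical
  have hkpos : (0:ℝ) < k := by exact_mod_cast Nat.lt_of_lt_of_le hp hpk
  have hppos : (0:ℝ) < p := by exact_mod_cast hp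
  have hpk' : (p:ℝ) ≤ k := by exact_mod_cast hpk
  have hpi : (2:ℝ) < Real.pi := by linarith [Real.pi_gt_three]
  have hhalf : (0:ℝ) < Real.pi/2 - 1 := by linarith
  have hPSD : S.PosSemidef := by rw [hS]; exact aux_msum_psd X
  have hPD : S.PosDef := aux_psd_pd hPSD hSinv
  have hsym : Sᵀ = S := by
    have h := hPSD.1
    rwa [Matrix.IsHermitian, conjTranspose_eq_transpose_of_trivial] at h
  have hdetpos : 0 < S.det := hPD.det_pos
  have hsyminv : (S⁻¹)ᵀ = S⁻¹ := by rw [transpose_nonsing_inv, hsym]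
  have hPDinv : S⁻¹.PosDef := hPD.inv
  set t : ℝ := trace S⁻¹ with ht
  have htpos : 0 < t := by
    rw [ht, trace_eq_sum_eig _ hPDinv.1]
    exact Finset.sum_pos (fun i _ => hPDinv.eigenvalues_pos i)
      ⟨⟨0, hp⟩, Finset.mem_univ _⟩
  have h2p : (0:ℝ) < 2 ^ p := by positivity
  -- per-element inequality obtained by averaging over all sign vectors
  have hkey : ∀ u ∈ X, (1 - u ⬝ᵥ S⁻¹ *ᵥ u) * (1 + t) + (S⁻¹ *ᵥ u) ⬝ᵥ (S⁻¹ *ᵥ u)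
      ≤ Real.pi / 2 := by
    intro u hu
    have hEw : ∀ w : Fin p → Bool,
        (1 - u ⬝ᵥ S⁻¹ *ᵥ u) * (1 + (fun i => sgn (w i)) ⬝ᵥ S⁻¹ *ᵥ (fun i => sgn (w i)))
          + (u ⬝ᵥ S⁻¹ *ᵥ (fun i => sgn (w i))) ^ 2 ≤ Real.pi / 2 := by
      intro w
      have h1 := hlocal u hu (fun i => sgn (w i)) (fun i => sgn_pm (w i))
      rw [aux_det_rank_two S hSinv hsym u (fun i => sgn (w i)),
        mul_comm (Real.pi/2) S.det] at h1
      exact (mul_le_mul_iff_right₀ hdetpos).mp h1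
    have hsumE := Finset.sum_le_sum (fun w (_ : w ∈ Finset.univ) => hEw w)
    rw [Finset.sum_const, Finset.card_univ, nsmul_eq_mul] at hsumE
    have hcard2 : ((Fintype.card (Fin p → Bool) : ℕ) : ℝ) = 2 ^ p := by
      simp [Fintype.card_fun]
    rw [hcard2] at hsumE
    have hr : ∑ w : Fin p → Bool, (fun i => sgn (w i)) ⬝ᵥ S⁻¹ *ᵥ (fun i => sgn (w i))
        = 2 ^ p * t := by
      have h := sum_sgn_quad (n := Fin p) S⁻¹
      simpa [ht] using h
    have hterm : ∀ w : Fin p → Bool, (u ⬝ᵥ S⁻¹ *ᵥ (fun i => sgn (w i))) ^ 2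
        = (fun i => sgn (w i)) ⬝ᵥ (vecMulVec (S⁻¹ *ᵥ u) (S⁻¹ *ᵥ u)) *ᵥ (fun i => sgn (w i)) := by
      intro w
      rw [aux_dotsymm S⁻¹ hsyminv u (fun i => sgn (w i)), aux_dot_vecMulVec, sq,
        dotProduct_comm (S⁻¹ *ᵥ u) (fun i => sgn (w i))]
    have hc : ∑ w : Fin p → Bool, (u ⬝ᵥ S⁻¹ *ᵥ (fun i => sgn (w i))) ^ 2
        = 2 ^ p * ((S⁻¹ *ᵥ u) ⬝ᵥ (S⁻¹ *ᵥ u)) := by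
      rw [Finset.sum_congr rfl (fun w _ => hterm w)]
      have h := sum_sgn_quad (n := Fin p) (vecMulVec (S⁻¹ *ᵥ u) (S⁻¹ *ᵥ u))
      rw [h, aux_trace_vecMulVec]
      simp
    have hsplit : ∑ w : Fin p → Bool,
        ((1 - u ⬝ᵥ S⁻¹ *ᵥ u) * (1 + (fun i => sgn (w i)) ⬝ᵥ S⁻¹ *ᵥ (fun i => sgn (w i)))
          + (u ⬝ᵥ S⁻¹ *ᵥ (fun i => sgn (w i))) ^ 2)
        = 2 ^ p * ((1 - u ⬝ᵥ S⁻¹ *ᵥ u) * (1 + t) + (S⁻¹ *ᵥ u) ⬝ᵥ (S⁻¹ *ᵥ u)) := by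
      rw [Finset.sum_add_distrib, ← Finset.mul_sum, Finset.sum_add_distrib, Finset.sum_const,
        Finset.card_univ, nsmul_eq_mul, hr, hc, hcard2]
      ring
    rw [hsplit] at hsumE
    exact le_of_mul_le_mul_left hsumE h2p
  -- global sums
  have hQ : (X.map fun u => u ⬝ᵥ S⁻¹ *ᵥ u).sum = (p:ℝ) := by
    have h1 : (X.map fun u => u ⬝ᵥ S⁻¹ *ᵥ u)
        = (X.map fun u => trace (S⁻¹ * vecMulVec u u)) :=
      Multiset.map_congr rfl (fun u _ => (aux_trace_mul_vecMulVec S⁻¹ u u).symm)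
    have h2 : (X.map fun u => trace (S⁻¹ * vecMulVec u u)).sum
        = trace ((X.map fun u => S⁻¹ * vecMulVec u u).sum) := by
      rw [Matrix.trace_multiset_sum, Multiset.map_map]; rfl
    have h3 : (X.map fun u => S⁻¹ * vecMulVec u u).sum
        = S⁻¹ * (X.map fun u => vecMulVec u u).sum := Multiset.sum_map_mul_left
    rw [h1, h2, h3, ← hS, nonsing_inv_mul _ hSinv, trace_one]
    simp
  have hN : (X.map fun u => (S⁻¹ *ᵥ u) ⬝ᵥ (S⁻¹ *ᵥ u)).sum = t := by
    have h1 : (X.map fun u => (S⁻¹ *ᵥ u) ⬝ᵥ (S⁻¹ *ᵥ u))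
        = (X.map fun u => trace ((S⁻¹ * S⁻¹) * vecMulVec u u)) := by
      refine Multiset.map_congr rfl (fun u _ => ?_)
      rw [aux_trace_mul_vecMulVec (S⁻¹ * S⁻¹) u u, ← Matrix.mulVec_mulVec,
        aux_dotsymm S⁻¹ hsyminv u (S⁻¹ *ᵥ u)]
    have h2 : (X.map fun u => trace ((S⁻¹ * S⁻¹) * vecMulVec u u)).sum
        = trace ((X.map fun u => (S⁻¹ * S⁻¹) * vecMulVec u u).sum) := by
      rw [Matrix.trace_multiset_sum, Multiset.map_map]; rfl
    have h3 : (X.map fun u => (S⁻¹ * S⁻¹) * vecMulVec u u).sum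
        = (S⁻¹ * S⁻¹) * (X.map fun u => vecMulVec u u).sum := Multiset.sum_map_mul_left
    rw [h1, h2, h3, ← hS, Matrix.mul_assoc, nonsing_inv_mul _ hSinv, mul_one, ht]
  have hmain : ((k:ℝ) - p) * (1 + t) + t ≤ k * (Real.pi/2) := by
    have hle := aux_msum_le X
      (fun u => (1 - u ⬝ᵥ S⁻¹ *ᵥ u) * (1 + t) + (S⁻¹ *ᵥ u) ⬝ᵥ (S⁻¹ *ᵥ u))
      (fun _ => Real.pi/2) hkey
    have hrhs : (X.map fun (_ : Fin p → ℝ) => Real.pi/2).sum = k * (Real.pi/2) := by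
      rw [Multiset.map_const', Multiset.sum_replicate, hcard, nsmul_eq_mul]
    have hdec : (X.map fun u => (1 - u ⬝ᵥ S⁻¹ *ᵥ u) * (1 + t) + (S⁻¹ *ᵥ u) ⬝ᵥ (S⁻¹ *ᵥ u))
        = X.map fun u => ((1 + t) + (-(1+t)) * (u ⬝ᵥ S⁻¹ *ᵥ u))
            + (S⁻¹ *ᵥ u) ⬝ᵥ (S⁻¹ *ᵥ u) :=
      Multiset.map_congr rfl (fun u _ => by ring)
    have hconst : (X.map fun (_ : Fin p → ℝ) => (1 + t : ℝ)).sum = k * (1 + t) := by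
      rw [Multiset.map_const', Multiset.sum_replicate, hcard, nsmul_eq_mul]
    rw [hdec, Multiset.sum_map_add, Multiset.sum_map_add, Multiset.sum_map_mul_left,
      hQ, hN, hconst, hrhs] at hle
    linarith [hle]
  -- final arithmetic
  have hDpos : (0:ℝ) < (p:ℝ) + k * (Real.pi/2 - 1) :=
    add_pos hppos (mul_pos hkpos hhalf)
  have htD : t * ((k:ℝ) - p + 1) ≤ (p:ℝ) + k * (Real.pi/2 - 1) := by nlinarith [hmain]
  have hdetinveq : S⁻¹.det = (S.det)⁻¹ := by rw [det_nonsing_inv, Ring.inverse_eq_inv']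
  have hub : (S.det)⁻¹ ≤ (t / p) ^ p := by
    rw [← hdetinveq]; exact det_le_trace_pow hp S⁻¹ hPDinv
  have h1 : (1:ℝ) ≤ (t/p)^p * S.det := by
    rw [inv_eq_one_div, div_le_iff₀ hdetpos] at hub; exact hub
  have hdet_ge : ((p:ℝ)/t)^p ≤ S.det := by
    have hcanc : ((p:ℝ)/t)^p * (t/(p:ℝ))^p = 1 := by
      have h : (p:ℝ)/t * (t/(p:ℝ)) = 1 := by field_simp
      rw [← mul_pow, h, one_pow]
    calc ((p:ℝ)/t)^p = ((p:ℝ)/t)^p * 1 := (mul_one _).symm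
    _ ≤ ((p:ℝ)/t)^p * ((t/(p:ℝ))^p * S.det) :=
        mul_le_mul_of_nonneg_left h1 (le_of_lt (by positivity))
    _ = (((p:ℝ)/t)^p * (t/(p:ℝ))^p) * S.det := by ring
    _ = S.det := by rw [hcanc, one_mul]
  have hb : ((k:ℝ) - p + 1) * ((p:ℝ) / ((p:ℝ) + k * (Real.pi/2 - 1))) ≤ (p:ℝ)/t := by
    rw [le_div_iff₀ htpos]
    have he : ((k:ℝ) - p + 1) * ((p:ℝ)/((p:ℝ) + k * (Real.pi/2 - 1))) * t
        = (t * ((k:ℝ)-p+1)) * ((p:ℝ)/((p:ℝ) + k * (Real.pi/2 - 1))) := by ring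
    rw [he]
    calc (t * ((k:ℝ)-p+1)) * ((p:ℝ)/((p:ℝ) + k * (Real.pi/2 - 1)))
        ≤ ((p:ℝ) + k * (Real.pi/2 - 1)) * ((p:ℝ)/((p:ℝ) + k * (Real.pi/2 - 1))) :=
        mul_le_mul_of_nonneg_right htD (by positivity)
    _ = p := by rw [mul_comm, div_mul_cancel₀ _ (ne_of_gt hDpos)]
  have hknp1 : (0:ℝ) ≤ (k:ℝ) - p + 1 := by linarith
  have hbnonneg : 0 ≤ ((k:ℝ) - p + 1) * ((p:ℝ)/((p:ℝ) + k * (Real.pi/2 - 1))) :=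
    mul_nonneg hknp1 (by positivity)
  have hpow : (((k:ℝ) - p + 1) * ((p:ℝ)/((p:ℝ) + k * (Real.pi/2 - 1))))^p ≤ ((p:ℝ)/t)^p :=
    pow_le_pow_left₀ hbnonneg hb p
  have hRHS : (k:ℝ)^p * (((k:ℝ) - p + 1)/k * ((p:ℝ)/((p:ℝ) + k*(Real.pi/2 - 1))))^p
      = (((k:ℝ) - p + 1) * ((p:ℝ)/((p:ℝ) + k*(Real.pi/2 - 1))))^p := by
    rw [← mul_pow]
    congr 1
    rw [← mul_assoc, mul_comm (k:ℝ) (((k:ℝ) - p + 1)/k), div_mul_cancel₀ _ (ne_of_gt hkpos)]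
  rw [ge_iff_le, hRHS]
  exact le_trans hpow hdet_ge
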